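/- Suppose 0 < ε ≤ β/100 ≤ 1/200 and m is sufficiently large. Let V₁, …, V_s (s ≥ 2) be pairwise disjoint vertex sets, each of size m, arranged in a cyclic order, and for each t = 1, …, s let S_t be a bipartite graph with vertex classes V_t and V_{t+1} (indices modulo s) which is ε-regular with density in [β − ε, β + ε]. Then there exist subsets V'_t ⊆ V_t of size m' := (1 − 4ε)m such that for every t the restriction of S_t to the pair (V'_t, V'_{t+1}) is (10ε, β)-super-regular. -/

import Mathlib

open scoped Classical

/-- Number of edges of `E ⊆ V × V` directed from `X` to `Y`. -/
noncomputable def ePair {V : Type*} (E : Finset (V × V)) (X Y : Finset V) : ℕ :=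
  (E.filter fun e => e.1 ∈ X ∧ e.2 ∈ Y).card

/-- Density of `E` between `X` and `Y`. -/
noncomputable def densPair {V : Type*} (E : Finset (V × V)) (X Y : Finset V) : ℝ :=
  (ePair E X Y : ℝ) / ((X.card : ℝ) * (Y.card : ℝ))

/-- The pair `(A,B)` of the bipartite graph `E` is `[ε,ε']`-regular. -/
def IsRegularPair {V : Type*} (E : Finset (V × V)) (A B : Finset V) (ε ε' : ℝ) : Prop :=
  ∀ X ⊆ A, ∀ Y ⊆ B,
    ε * (A.card : ℝ) ≤ (X.card : ℝ) → ε * (B.card : ℝ) ≤ (Y.card : ℝ) →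
    |densPair E A B - densPair E X Y| < ε'

/-- Number of edges of `E` from the vertex `a` into the set `B`. -/
noncomputable def degToIn {V : Type*} (E : Finset (V × V)) (a : V) (B : Finset V) : ℕ :=
  (E.filter fun e => e.1 = a ∧ e.2 ∈ B).card

/-- Number of edges of `E` from the set `A` into the vertex `b`. -/
noncomputable def degFromIn {V : Type*} (E : Finset (V × V)) (A : Finset V) (b : V) : ℕ :=
  (E.filter fun e => e.1 ∈ A ∧ e.2 = b).card

/-- The pair `(A,B)` of the bipartite graph `E` (restricted to `A × B`) is
`(ε,d)`-super-regular. -/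
def IsSuperRegularPair {V : Type*} (E : Finset (V × V)) (A B : Finset V) (ε d : ℝ) : Prop :=
  (∀ X ⊆ A, ∀ Y ⊆ B,
      ε * (A.card : ℝ) ≤ (X.card : ℝ) → ε * (B.card : ℝ) ≤ (Y.card : ℝ) →
      d - ε ≤ densPair E X Y ∧ densPair E X Y ≤ d + ε) ∧
  (∀ a ∈ A, (d - ε) * (B.card : ℝ) ≤ (degToIn E a B : ℝ) ∧
            (degToIn E a B : ℝ) ≤ (d + ε) * (B.card : ℝ)) ∧
  (∀ b ∈ B, (d - ε) * (A.card : ℝ) ≤ (degFromIn E A b : ℝ) ∧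
            (degFromIn E A b : ℝ) ≤ (d + ε) * (A.card : ℝ))

variable {V : Type*}

lemma ePair_eq_sum_deg (E : Finset (V × V)) (X B : Finset V) :
    ePair E X B = ∑ a ∈ X, degToIn E a B := by
  classical
  unfold ePair degToIn
  rw [Finset.card_eq_sum_card_fiberwise (f := Prod.fst) (t := X)
    (fun e he => (Finset.mem_filter.mp he).2.1)]
  refine Finset.sum_congr rfl fun a ha => ?_
  congr 1
  ext e
  simp only [Finset.mem_filter]
  constructor
  · rintro ⟨⟨he, hx, hb⟩, h1⟩; exact ⟨he, h1, hb⟩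
  · rintro ⟨he, h1, hb⟩; exact ⟨⟨he, h1 ▸ ha, hb⟩, h1⟩

lemma ePair_eq_sum_degFrom (E : Finset (V × V)) (X Y : Finset V) :
    ePair E X Y = ∑ b ∈ Y, degFromIn E X b := by
  classical
  unfold ePair degFromIn
  rw [Finset.card_eq_sum_card_fiberwise (f := Prod.snd) (t := Y)
    (fun e he => (Finset.mem_filter.mp he).2.2)]
  refine Finset.sum_congr rfl fun b hb => ?_
  congr 1
  ext e
  simp only [Finset.mem_filter]
  constructor
  · rintro ⟨⟨he, hx, hy⟩, h2⟩; exact ⟨he, hx, h2⟩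
  · rintro ⟨he, hx, h2⟩; exact ⟨⟨he, hx, h2 ▸ hb⟩, h2⟩

lemma degToIn_le_card (E : Finset (V × V)) (a : V) (B : Finset V) :
    degToIn E a B ≤ B.card := by
  unfold degToIn
  apply Finset.card_le_card_of_injOn (fun e => e.2)
  · intro e he; exact (Finset.mem_filter.mp he).2.2
  · intro e he f hf h
    have h1 := (Finset.mem_filter.mp he).2.1
    have h2 := (Finset.mem_filter.mp hf).2.1
    exact Prod.ext (h1.trans h2.symm) h

lemma degFromIn_le_card (E : Finset (V × V)) (A : Finset V) (b : V) :
    degFromIn E A b ≤ A.card := by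
  unfold degFromIn
  apply Finset.card_le_card_of_injOn (fun e => e.1)
  · intro e he; exact (Finset.mem_filter.mp he).2.1
  · intro e he f hf h
    have h1 := (Finset.mem_filter.mp he).2.2
    have h2 := (Finset.mem_filter.mp hf).2.2
    exact Prod.ext h (h1.trans h2.symm)

lemma degToIn_mono (E : Finset (V × V)) (a : V) {B' B : Finset V} (h : B' ⊆ B) :
    degToIn E a B' ≤ degToIn E a B := by
  apply Finset.card_le_card
  apply Finset.monotone_filter_right
  intro e _ ⟨h1, h2⟩; exact ⟨h1, h h2⟩

lemma degFromIn_mono (E : Finset (V × V)) (b : V) {A' A : Finset V} (h : A' ⊆ A) :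
    degFromIn E A' b ≤ degFromIn E A b := by
  apply Finset.card_le_card
  apply Finset.monotone_filter_right
  intro e _ ⟨h1, h2⟩; exact ⟨h h1, h2⟩

lemma degToIn_le_add (E : Finset (V × V)) (a : V) {B' B : Finset V} (h : B' ⊆ B) :
    degToIn E a B ≤ degToIn E a B' + (B.card - B'.card) := by
  rw [← Finset.card_sdiff_of_subset h]
  have h1 : degToIn E a B ≤ degToIn E a B' + degToIn E a (B \ B') := by
    unfold degToIn
    refine le_trans (Finset.card_le_card ?_) (Finset.card_union_le _ _)
    intro e he
    rcases Finset.mem_filter.mp he with ⟨heE, h1, h2⟩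
    by_cases hb : e.2 ∈ B'
    · exact Finset.mem_union_left _ (Finset.mem_filter.mpr ⟨heE, h1, hb⟩)
    · exact Finset.mem_union_right _ (Finset.mem_filter.mpr ⟨heE, h1, Finset.mem_sdiff.mpr ⟨h2, hb⟩⟩)
  exact le_trans h1 (by gcongr; exact degToIn_le_card _ _ _)

lemma degFromIn_le_add (E : Finset (V × V)) (b : V) {A' A : Finset V} (h : A' ⊆ A) :
    degFromIn E A b ≤ degFromIn E A' b + (A.card - A'.card) := by
  rw [← Finset.card_sdiff_of_subset h]
  have h1 : degFromIn E A b ≤ degFromIn E A' b + degFromIn E (A \ A') b := by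
    unfold degFromIn
    refine le_trans (Finset.card_le_card ?_) (Finset.card_union_le _ _)
    intro e he
    rcases Finset.mem_filter.mp he with ⟨heE, h1, h2⟩
    by_cases ha : e.1 ∈ A'
    · exact Finset.mem_union_left _ (Finset.mem_filter.mpr ⟨heE, ha, h2⟩)
    · exact Finset.mem_union_right _ (Finset.mem_filter.mpr ⟨heE, Finset.mem_sdiff.mpr ⟨h1, ha⟩, h2⟩)
  exact le_trans h1 (by gcongr; exact degFromIn_le_card _ _ _)

lemma densPair_le_of_forall_le (E : Finset (V × V)) (X B : Finset V) (c : ℝ)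
    (hX : 0 < (X.card : ℝ)) (hB : 0 < (B.card : ℝ))
    (h : ∀ a ∈ X, (degToIn E a B : ℝ) ≤ c * B.card) :
    densPair E X B ≤ c := by
  have hsum : (ePair E X B : ℝ) ≤ c * B.card * X.card := by
    rw [ePair_eq_sum_deg]
    push_cast
    calc ∑ a ∈ X, (degToIn E a B : ℝ) ≤ ∑ a ∈ X, c * B.card := Finset.sum_le_sum h
    _ = c * B.card * X.card := by rw [Finset.sum_const, nsmul_eq_mul]; ring
  rw [densPair, div_le_iff₀ (by positivity)]
  nlinarith

lemma le_densPair_of_forall_le (E : Finset (V × V)) (X B : Finset V) (c : ℝ)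
    (hX : 0 < (X.card : ℝ)) (hB : 0 < (B.card : ℝ))
    (h : ∀ a ∈ X, c * B.card ≤ (degToIn E a B : ℝ)) :
    c ≤ densPair E X B := by
  have hsum : c * B.card * X.card ≤ (ePair E X B : ℝ) := by
    rw [ePair_eq_sum_deg]
    push_cast
    calc c * B.card * X.card = ∑ a ∈ X, c * B.card := by
          rw [Finset.sum_const, nsmul_eq_mul]; ring
    _ ≤ ∑ a ∈ X, (degToIn E a B : ℝ) := Finset.sum_le_sum h
  rw [densPair, le_div_iff₀ (by positivity)]
  nlinarith

lemma densPair_le_of_forall_le' (E : Finset (V × V)) (A Y : Finset V) (c : ℝ)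
    (hA : 0 < (A.card : ℝ)) (hY : 0 < (Y.card : ℝ))
    (h : ∀ b ∈ Y, (degFromIn E A b : ℝ) ≤ c * A.card) :
    densPair E A Y ≤ c := by
  have hsum : (ePair E A Y : ℝ) ≤ c * A.card * Y.card := by
    rw [ePair_eq_sum_degFrom]
    push_cast
    calc ∑ b ∈ Y, (degFromIn E A b : ℝ) ≤ ∑ b ∈ Y, c * A.card := Finset.sum_le_sum h
    _ = c * A.card * Y.card := by rw [Finset.sum_const, nsmul_eq_mul]; ring
  rw [densPair, div_le_iff₀ (by positivity)]
  nlinarith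

lemma le_densPair_of_forall_le' (E : Finset (V × V)) (A Y : Finset V) (c : ℝ)
    (hA : 0 < (A.card : ℝ)) (hY : 0 < (Y.card : ℝ))
    (h : ∀ b ∈ Y, c * A.card ≤ (degFromIn E A b : ℝ)) :
    c ≤ densPair E A Y := by
  have hsum : c * A.card * Y.card ≤ (ePair E A Y : ℝ) := by
    rw [ePair_eq_sum_degFrom]
    push_cast
    calc c * A.card * Y.card = ∑ b ∈ Y, c * A.card := by
          rw [Finset.sum_const, nsmul_eq_mul]; ring
    _ ≤ ∑ b ∈ Y, (degFromIn E A b : ℝ) := Finset.sum_le_sum h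
  rw [densPair, le_div_iff₀ (by positivity)]
  nlinarith

lemma small_low_to (E : Finset (V × V)) (A B : Finset V) (ε : ℝ) (hε : 0 < ε) (hε1 : ε ≤ 1)
    (hA : 0 < (A.card : ℝ)) (hB : 0 < (B.card : ℝ)) (hreg : IsRegularPair E A B ε ε) :
    ((A.filter fun a => (degToIn E a B : ℝ) < (densPair E A B - ε) * B.card).card : ℝ)
      < ε * A.card := by
  by_contra hcon
  push_neg at hcon
  set X := A.filter fun a => (degToIn E a B : ℝ) < (densPair E A B - ε) * B.card with hXdef
  have hXA : X ⊆ A := Finset.filter_subset _ _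
  have hXpos : (0:ℝ) < X.card := lt_of_lt_of_le (by positivity) hcon
  have h2 := hreg X hXA B Finset.Subset.rfl hcon (by nlinarith)
  have h3 : densPair E X B ≤ densPair E A B - ε := by
    apply densPair_le_of_forall_le E X B _ hXpos hB
    intro a ha
    exact le_of_lt (Finset.mem_filter.mp ha).2
  rw [abs_lt] at h2
  linarith [h2.2]

lemma small_high_to (E : Finset (V × V)) (A B : Finset V) (ε : ℝ) (hε : 0 < ε) (hε1 : ε ≤ 1)
    (hA : 0 < (A.card : ℝ)) (hB : 0 < (B.card : ℝ)) (hreg : IsRegularPair E A B ε ε) :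
    ((A.filter fun a => (densPair E A B + ε) * B.card < (degToIn E a B : ℝ)).card : ℝ)
      < ε * A.card := by
  by_contra hcon
  push_neg at hcon
  set X := A.filter fun a => (densPair E A B + ε) * B.card < (degToIn E a B : ℝ) with hXdef
  have hXA : X ⊆ A := Finset.filter_subset _ _
  have hXpos : (0:ℝ) < X.card := lt_of_lt_of_le (by positivity) hcon
  have h2 := hreg X hXA B Finset.Subset.rfl hcon (by nlinarith)
  have h3 : densPair E A B + ε ≤ densPair E X B := by
    apply le_densPair_of_forall_le E X B _ hXpos hB
    intro a ha
    exact le_of_lt (Finset.mem_filter.mp ha).2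
  rw [abs_lt] at h2
  linarith [h2.1]

lemma small_low_from (E : Finset (V × V)) (A B : Finset V) (ε : ℝ) (hε : 0 < ε) (hε1 : ε ≤ 1)
    (hA : 0 < (A.card : ℝ)) (hB : 0 < (B.card : ℝ)) (hreg : IsRegularPair E A B ε ε) :
    ((B.filter fun b => (degFromIn E A b : ℝ) < (densPair E A B - ε) * A.card).card : ℝ)
      < ε * B.card := by
  by_contra hcon
  push_neg at hcon
  set Y := B.filter fun b => (degFromIn E A b : ℝ) < (densPair E A B - ε) * A.card with hYdef
  have hYB : Y ⊆ B := Finset.filter_subset _ _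
  have hYpos : (0:ℝ) < Y.card := lt_of_lt_of_le (by positivity) hcon
  have h2 := hreg A Finset.Subset.rfl Y hYB (by nlinarith) hcon
  have h3 : densPair E A Y ≤ densPair E A B - ε := by
    apply densPair_le_of_forall_le' E A Y _ hA hYpos
    intro b hb
    exact le_of_lt (Finset.mem_filter.mp hb).2
  rw [abs_lt] at h2
  linarith [h2.2]

lemma small_high_from (E : Finset (V × V)) (A B : Finset V) (ε : ℝ) (hε : 0 < ε) (hε1 : ε ≤ 1)
    (hA : 0 < (A.card : ℝ)) (hB : 0 < (B.card : ℝ)) (hreg : IsRegularPair E A B ε ε) :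
    ((B.filter fun b => (densPair E A B + ε) * A.card < (degFromIn E A b : ℝ)).card : ℝ)
      < ε * B.card := by
  by_contra hcon
  push_neg at hcon
  set Y := B.filter fun b => (densPair E A B + ε) * A.card < (degFromIn E A b : ℝ) with hYdef
  have hYB : Y ⊆ B := Finset.filter_subset _ _
  have hYpos : (0:ℝ) < Y.card := lt_of_lt_of_le (by positivity) hcon
  have h2 := hreg A Finset.Subset.rfl Y hYB (by nlinarith) hcon
  have h3 : densPair E A B + ε ≤ densPair E A Y := by
    apply le_densPair_of_forall_le' E A Y _ hA hYpos
    intro b hb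
    exact le_of_lt (Finset.mem_filter.mp hb).2
  rw [abs_lt] at h2
  linarith [h2.1]

set_option maxHeartbeats 1600000 in
/-- along a cyclic sequence of ε-regular bipartite pairs of density ≈ β one can
delete `4εm` vertices from each cluster so that every pair becomes `(10ε, β)`-super-regular. -/
theorem superregular_subclusters_on_cycle :
    ∀ β ε : ℝ, 0 < ε → ε ≤ β / 100 → β / 100 ≤ 1 / 200 →
    ∃ m₀ : ℕ, ∀ m : ℕ, m₀ ≤ m →
    ∀ s : ℕ, 2 ≤ s →
    ∀ (V : Type) [DecidableEq V],
    ∀ Vt : ZMod s → Finset V,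
      (∀ t u : ZMod s, t ≠ u → Disjoint (Vt t) (Vt u)) →
      (∀ t, (Vt t).card = m) →
    ∀ S : ZMod s → Finset (V × V),
      (∀ t, ∀ e ∈ S t, e.1 ∈ Vt t ∧ e.2 ∈ Vt (t+1)) →
      (∀ t, IsRegularPair (S t) (Vt t) (Vt (t+1)) ε ε) →
      (∀ t, β - ε ≤ densPair (S t) (Vt t) (Vt (t+1)) ∧
            densPair (S t) (Vt t) (Vt (t+1)) ≤ β + ε) →
      ∃ V' : ZMod s → Finset V,
        (∀ t, V' t ⊆ Vt t) ∧
        (∀ t, (V' t).card = ⌊(1 - 4*ε) * (m : ℝ)⌋₊) ∧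
        (∀ t, IsSuperRegularPair (S t) (V' t) (V' (t+1)) (10*ε) β) := by
  intro β ε hε hεβ hβ
  have hε200 : ε ≤ 1/200 := by linarith
  have hε1 : ε ≤ 1 := by linarith
  have hβhalf : β ≤ 1/2 := by linarith
  have hβ100 : 100 * ε ≤ β := by linarith
  refine ⟨⌈(1:ℝ)/ε⌉₊ + 1, ?_⟩
  intro m hm s hs V _ Vt hdisj hcard S hSsub hreg hdens
  have hm1 : 1 ≤ ε * m := by
    have h1 : (1:ℝ)/ε ≤ (⌈(1:ℝ)/ε⌉₊ : ℝ) := Nat.le_ceil _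
    have h2 : ((⌈(1:ℝ)/ε⌉₊ + 1 : ℕ) : ℝ) ≤ (m:ℝ) := by exact_mod_cast hm
    push_cast at h2
    rw [div_le_iff₀ hε] at h1
    nlinarith
  have hMpos : (0:ℝ) < m := by nlinarith
  have hM200 : (200:ℝ) ≤ m := by nlinarith
  set m' := ⌊(1 - 4*ε) * (m:ℝ)⌋₊ with hm'def
  have hm'le : (m' : ℝ) ≤ (1 - 4*ε) * m := Nat.floor_le (by nlinarith)
  have hm'gt : (1 - 4*ε) * m - 1 ≤ (m' : ℝ) := by
    have h := Nat.lt_floor_add_one ((1 - 4*ε) * (m:ℝ))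
    push_cast at h ⊢
    linarith
  have hm'leM : (m' : ℝ) ≤ m := by nlinarith
  have hm'pos : (0:ℝ) < m' := by nlinarith
  have hsub1 : ∀ t : ZMod s, t - 1 + 1 = t := fun t => by ring
  classical
  set Bad := fun t : ZMod s => (Vt t).filter (fun a =>
      ((degToIn (S t) a (Vt (t+1)) : ℝ) <
          (densPair (S t) (Vt t) (Vt (t+1)) - ε) * (Vt (t+1)).card ∨
        (densPair (S t) (Vt t) (Vt (t+1)) + ε) * (Vt (t+1)).card <
          (degToIn (S t) a (Vt (t+1)) : ℝ)) ∨
      ((degFromIn (S (t-1)) (Vt (t-1)) a : ℝ) <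
          (densPair (S (t-1)) (Vt (t-1)) (Vt t) - ε) * (Vt (t-1)).card ∨
        (densPair (S (t-1)) (Vt (t-1)) (Vt t) + ε) * (Vt (t-1)).card <
          (degFromIn (S (t-1)) (Vt (t-1)) a : ℝ))) with hBaddef
  have hApos : ∀ t : ZMod s, (0:ℝ) < (Vt t).card := by
    intro t; rw [hcard]; exact hMpos
  have hBadlt : ∀ t, ((Bad t).card : ℝ) < 4 * ε * m := by
    intro t
    have h1 := small_low_to (S t) (Vt t) (Vt (t+1)) ε hε hε1 (hApos t) (hApos (t+1)) (hreg t)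
    have h2 := small_high_to (S t) (Vt t) (Vt (t+1)) ε hε hε1 (hApos t) (hApos (t+1)) (hreg t)
    have h3 := small_low_from (S (t-1)) (Vt (t-1)) (Vt (t-1+1)) ε hε hε1 (hApos (t-1))
      (hApos (t-1+1)) (hreg (t-1))
    have h4 := small_high_from (S (t-1)) (Vt (t-1)) (Vt (t-1+1)) ε hε hε1 (hApos (t-1))
      (hApos (t-1+1)) (hreg (t-1))
    simp only [hsub1] at h3 h4
    set F1 := (Vt t).filter fun a => (degToIn (S t) a (Vt (t+1)) : ℝ) <
        (densPair (S t) (Vt t) (Vt (t+1)) - ε) * (Vt (t+1)).card with hF1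
    set F2 := (Vt t).filter fun a => (densPair (S t) (Vt t) (Vt (t+1)) + ε) * (Vt (t+1)).card <
        (degToIn (S t) a (Vt (t+1)) : ℝ) with hF2
    set F3 := (Vt t).filter fun b => (degFromIn (S (t-1)) (Vt (t-1)) b : ℝ) <
        (densPair (S (t-1)) (Vt (t-1)) (Vt t) - ε) * (Vt (t-1)).card with hF3
    set F4 := (Vt t).filter fun b => (densPair (S (t-1)) (Vt (t-1)) (Vt t) + ε) * (Vt (t-1)).card <
        (degFromIn (S (t-1)) (Vt (t-1)) b : ℝ) with hF4
    have hsubU : Bad t ⊆ (F1 ∪ F2) ∪ (F3 ∪ F4) := by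
      intro a ha
      rw [hBaddef, Finset.mem_filter] at ha
      obtain ⟨haV, hcond⟩ := ha
      rcases hcond with (h | h) | (h | h)
      · exact Finset.mem_union_left _ (Finset.mem_union_left _ (Finset.mem_filter.mpr ⟨haV, h⟩))
      · exact Finset.mem_union_left _ (Finset.mem_union_right _ (Finset.mem_filter.mpr ⟨haV, h⟩))
      · exact Finset.mem_union_right _ (Finset.mem_union_left _ (Finset.mem_filter.mpr ⟨haV, h⟩))
      · exact Finset.mem_union_right _ (Finset.mem_union_right _ (Finset.mem_filter.mpr ⟨haV, h⟩))
    have hcardle : (Bad t).card ≤ F1.card + F2.card + F3.card + F4.card := by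
      calc (Bad t).card ≤ ((F1 ∪ F2) ∪ (F3 ∪ F4)).card := Finset.card_le_card hsubU
      _ ≤ (F1 ∪ F2).card + (F3 ∪ F4).card := Finset.card_union_le _ _
      _ ≤ (F1.card + F2.card) + (F3.card + F4.card) := by
          gcongr <;> exact Finset.card_union_le _ _
      _ = F1.card + F2.card + F3.card + F4.card := by ring
    have hcast : ((Bad t).card : ℝ) ≤ (F1.card : ℝ) + F2.card + F3.card + F4.card := by
      exact_mod_cast hcardle
    rw [hcard] at h1 h2 h3 h4
    linarith
  have hGood : ∀ t : ZMod s, ∃ W, W ⊆ (Vt t) \ Bad t ∧ W.card = m' := by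
    intro t
    apply Finset.exists_subset_card_eq
    have hsub : Bad t ⊆ Vt t := Finset.filter_subset _ _
    have hle : (Bad t).card ≤ m := by
      have := Finset.card_le_card hsub; rwa [hcard] at this
    have hc : (((Vt t) \ Bad t).card : ℝ) = (m : ℝ) - (Bad t).card := by
      rw [Finset.card_sdiff_of_subset hsub, hcard t, Nat.cast_sub hle]
    have : (m' : ℝ) ≤ (((Vt t) \ Bad t).card : ℝ) := by
      rw [hc]; have := hBadlt t; nlinarith
    exact_mod_cast this
  choose V' hV'sub hV'card using hGood
  have hV'Vt : ∀ t, V' t ⊆ Vt t := fun t => (hV'sub t).trans (Finset.sdiff_subset)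
  have hm'natle : ∀ t : ZMod s, m' ≤ m := by
    intro t
    have := Finset.card_le_card (hV'Vt t); rwa [hV'card, hcard] at this
  have hnotbad : ∀ t : ZMod s, ∀ a ∈ V' t, a ∈ Vt t ∧ a ∉ Bad t := by
    intro t a ha
    have := hV'sub t ha
    rwa [Finset.mem_sdiff] at this
  refine ⟨V', hV'Vt, hV'card, ?_⟩
  intro t
  have hd := hdens t
  set dt := densPair (S t) (Vt t) (Vt (t+1)) with hdt
  have hcdiff : (((Vt (t+1)) \ V' (t+1)).card : ℝ) = (m : ℝ) - m' := by
    rw [Finset.card_sdiff_of_subset (hV'Vt (t+1)), hcard, hV'card, Nat.cast_sub (hm'natle t)]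
  have hcdiff' : (((Vt t) \ V' t).card : ℝ) = (m : ℝ) - m' := by
    rw [Finset.card_sdiff_of_subset (hV'Vt t), hcard, hV'card, Nat.cast_sub (hm'natle t)]
  refine ⟨?_, ?_, ?_⟩
  · -- density part
    intro X hX Y hY hXc hYc
    rw [hV'card] at hXc hYc
    have hkey : ε * (m:ℝ) ≤ 10*ε*(m':ℝ) := by
      have p1 : ε * ((1 - 4*ε) * m - 1) ≤ ε * m' := mul_le_mul_of_nonneg_left hm'gt hε.le
      have p2 : ε * (ε * m) ≤ (1/200) * (ε * m) :=
        mul_le_mul_of_nonneg_right hε200 (by nlinarith)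
      have p3 : ε * 1 ≤ ε * (ε * m) := mul_le_mul_of_nonneg_left hm1 hε.le
      nlinarith
    have hXc' : ε * ((Vt t).card : ℝ) ≤ (X.card : ℝ) := by
      rw [hcard]; linarith
    have hYc' : ε * ((Vt (t+1)).card : ℝ) ≤ (Y.card : ℝ) := by
      rw [hcard]; linarith
    have h := hreg t X (hX.trans (hV'Vt t)) Y (hY.trans (hV'Vt (t+1))) hXc' hYc'
    rw [← hdt, abs_lt] at h
    constructor
    · linarith [h.2, hd.1]
    · linarith [h.1, hd.2]
  · -- out-degrees
    intro a ha
    obtain ⟨haV, haB⟩ := hnotbad t a ha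
    rw [hBaddef, Finset.mem_filter, not_and, not_or, not_or, not_or] at haB
    obtain ⟨⟨hlo, hhi⟩, -⟩ := haB haV
    rw [not_lt] at hlo hhi
    rw [← hdt, hcard] at hlo hhi
    have hup : (degToIn (S t) a (V' (t+1)) : ℝ) ≤ (degToIn (S t) a (Vt (t+1)) : ℝ) := by
      exact_mod_cast degToIn_mono (S t) a (hV'Vt (t+1))
    have hdn : (degToIn (S t) a (Vt (t+1)) : ℝ) ≤ (degToIn (S t) a (V' (t+1)) : ℝ) + ((m:ℝ) - m') := by
      have h0 := degToIn_le_add (S t) a (hV'Vt (t+1))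
      rw [hcard, hV'card] at h0
      have h2 : ((degToIn (S t) a (Vt (t+1)) : ℕ) : ℝ) ≤
          ((degToIn (S t) a (V' (t+1)) : ℕ) : ℝ) + ((m - m' : ℕ) : ℝ) := by
        exact_mod_cast h0
      rwa [Nat.cast_sub (hm'natle t)] at h2
    rw [hV'card]
    constructor
    · have p1 : (β - 10*ε) * (m':ℝ) ≤ (β - 10*ε) * m :=
        mul_le_mul_of_nonneg_left hm'leM (by linarith)
      have p2 : (β - ε) * m ≤ dt * m := mul_le_mul_of_nonneg_right hd.1 hMpos.le
      nlinarith
    · have p1 : (β + 10*ε) * ((1 - 4*ε) * m - 1) ≤ (β + 10*ε) * m' :=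
        mul_le_mul_of_nonneg_left hm'gt (by linarith)
      have p2 : dt * m ≤ (β + ε) * m := mul_le_mul_of_nonneg_right hd.2 hMpos.le
      have p3 : β * (ε * m) ≤ (1/2) * (ε * m) :=
        mul_le_mul_of_nonneg_right hβhalf (by nlinarith)
      have p4 : ε * (ε * m) ≤ (1/200) * (ε * m) :=
        mul_le_mul_of_nonneg_right hε200 (by nlinarith)
      nlinarith
  · -- in-degrees
    intro b hb
    obtain ⟨hbV, hbB⟩ := hnotbad (t+1) b hb
    rw [hBaddef, Finset.mem_filter, not_and, not_or, not_or, not_or] at hbB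
    obtain ⟨-, hlo, hhi⟩ := hbB hbV
    rw [not_lt] at hlo hhi
    simp only [add_sub_cancel_right] at hlo hhi
    rw [← hdt, hcard] at hlo hhi
    have hup : (degFromIn (S t) (V' t) b : ℝ) ≤ (degFromIn (S t) (Vt t) b : ℝ) := by
      exact_mod_cast degFromIn_mono (S t) b (hV'Vt t)
    have hdn : (degFromIn (S t) (Vt t) b : ℝ) ≤ (degFromIn (S t) (V' t) b : ℝ) + ((m:ℝ) - m') := by
      have h0 := degFromIn_le_add (S t) b (hV'Vt t)
      rw [hcard, hV'card] at h0
      have h2 : ((degFromIn (S t) (Vt t) b : ℕ) : ℝ) ≤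
          ((degFromIn (S t) (V' t) b : ℕ) : ℝ) + ((m - m' : ℕ) : ℝ) := by
        exact_mod_cast h0
      rwa [Nat.cast_sub (hm'natle t)] at h2
    rw [hV'card]
    constructor
    · have p1 : (β - 10*ε) * (m':ℝ) ≤ (β - 10*ε) * m :=
        mul_le_mul_of_nonneg_left hm'leM (by linarith)
      have p2 : (β - ε) * m ≤ dt * m := mul_le_mul_of_nonneg_right hd.1 hMpos.le
      nlinarith
    · have p1 : (β + 10*ε) * ((1 - 4*ε) * m - 1) ≤ (β + 10*ε) * m' :=
        mul_le_mul_of_nonneg_left hm'gt (by linarith)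
      have p2 : dt * m ≤ (β + ε) * m := mul_le_mul_of_nonneg_right hd.2 hMpos.le
      have p3 : β * (ε * m) ≤ (1/2) * (ε * m) :=
        mul_le_mul_of_nonneg_right hβhalf (by nlinarith)
      have p4 : ε * (ε * m) ≤ (1/200) * (ε * m) :=
        mul_le_mul_of_nonneg_right hε200 (by nlinarith)
      nlinarith
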